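/- Let B be a UFD of characteristic zero and Δ any set of locally nilpotent derivations of B. Let A_Δ = ⋂_{D∈Δ} ker D and K_Δ = ⋂_{D∈Δ} Frac(ker D) (intersection inside Frac B). Then Frac(A_Δ) = K_Δ. In particular Frac(ML(B)) = FML(B). -/

import Mathlib

def IsLND {B : Type*} [CommRing B] (D : B → B) : Prop :=
  (∀ a b : B, D (a + b) = D a + D b) ∧
  (∀ a b : B, D (a * b) = a * D b + D a * b) ∧
  (∀ x : B, ∃ n : ℕ, D^[n] x = 0)

section Aux

open Finset

variable {B : Type*} [CommRing B] {D : B → B}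

lemma lnd_map_zero (hadd : ∀ a b : B, D (a + b) = D a + D b) : D 0 = 0 := by
  have h := hadd 0 0
  rw [add_zero] at h
  exact (right_eq_add.mp h)

/-- The iterated Leibniz rule. -/
lemma lnd_iterate_mul (hadd : ∀ a b : B, D (a + b) = D a + D b)
    (hmul : ∀ a b : B, D (a * b) = a * D b + D a * b) (n : ℕ) (p q : B) :
    D^[n] (p * q) = ∑ k ∈ range (n + 1), n.choose k • (D^[n - k] p * D^[k] q) := by
  have Dh : ∀ (s : Finset ℕ) (f : ℕ → B), D (∑ k ∈ s, f k) = ∑ k ∈ s, D (f k) := by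
    intro s f
    exact map_sum (AddMonoidHom.mk' D hadd) f s
  have Dsmul : ∀ (c : ℕ) (x : B), D (c • x) = c • D x := by
    intro c x
    exact (AddMonoidHom.mk' D hadd).map_nsmul c x
  induction n with
  | zero => simp
  | succ n IH =>
    calc
      D^[n + 1] (p * q) =
          D (∑ k ∈ range (n + 1), n.choose k • (D^[n - k] p * D^[k] q)) := by
        rw [Function.iterate_succ_apply', IH]
      _ = (∑ k ∈ range (n + 1), n.choose k • (D^[n - k + 1] p * D^[k] q)) +
          ∑ k ∈ range (n + 1), n.choose k • (D^[n - k] p * D^[k + 1] q) := by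
        rw [Dh]
        simp_rw [Dsmul, hmul, smul_add, sum_add_distrib, Function.iterate_succ_apply']
        rw [add_comm]
      _ = (∑ k ∈ range (n + 1), n.choose (k + 1) • (D^[n - k] p * D^[k + 1] q)) +
            1 • (D^[n + 1] p * D^[0] q) +
          ∑ k ∈ range (n + 1), n.choose k • (D^[n - k] p * D^[k + 1] q) := ?_
      _ = ((∑ k ∈ range (n + 1), n.choose k • (D^[n - k] p * D^[k + 1] q)) +
            ∑ k ∈ range (n + 1), n.choose (k + 1) • (D^[n - k] p * D^[k + 1] q)) +
            1 • (D^[n + 1] p * D^[0] q) := by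
        rw [add_comm, add_assoc]
      _ = (∑ i ∈ range (n + 1),
            (n + 1).choose (i + 1) • (D^[n + 1 - (i + 1)] p * D^[i + 1] q)) +
            1 • (D^[n + 1] p * D^[0] q) := by
        simp_rw [Nat.choose_succ_succ, Nat.succ_sub_succ, add_smul, sum_add_distrib]
      _ = ∑ k ∈ range (n + 1 + 1), (n + 1).choose k • (D^[n + 1 - k] p * D^[k] q) := by
        rw [sum_range_succ' _ (n + 1), Nat.choose_zero_right, tsub_zero]
    congr
    refine (sum_range_succ' _ _).trans (congr_arg₂ (· + ·) ?_ ?_)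
    · rw [sum_range_succ, Nat.choose_succ_self, zero_smul, add_zero]
      refine sum_congr rfl fun k hk => ?_
      rw [mem_range] at hk
      have h' : n - (k + 1) + 1 = n - k := by omega
      rw [h']
    · simp

lemma lnd_iterate_zero (hadd : ∀ a b : B, D (a + b) = D a + D b) (k : ℕ) :
    D^[k] (0 : B) = 0 := by
  induction k with
  | zero => simp
  | succ k IH => rw [Function.iterate_succ_apply, lnd_map_zero hadd, IH]

lemma lnd_iterate_eventually (hadd : ∀ a b : B, D (a + b) = D a + D b)
    {a : B} {m n : ℕ} (h : D^[m] a = 0) (hmn : m ≤ n) : D^[n] a = 0 := by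
  obtain ⟨k, rfl⟩ := Nat.exists_eq_add_of_le hmn
  rw [add_comm, Function.iterate_add_apply, h, lnd_iterate_zero hadd]

/-- The kernel of a locally nilpotent derivation on a char-zero domain is
factorially closed. -/
lemma lnd_factorially_closed [IsDomain B] [CharZero B] (hD : IsLND D)
    {a b : B} (ha : a ≠ 0) (hb : b ≠ 0) (h : D (a * b) = 0) : D a = 0 := by
  classical
  obtain ⟨hadd, hmul, hnilp⟩ := hD
  by_contra hDa
  -- smallest exponents killing a and b
  have hexa := hnilp a
  have hexb := hnilp b
  set M := Nat.find hexa with hM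
  set N := Nat.find hexb with hN
  have hMa : D^[M] a = 0 := Nat.find_spec hexa
  have hNb : D^[N] b = 0 := Nat.find_spec hexb
  have hM2 : 2 ≤ M := by
    have h0 : M ≠ 0 := fun e => ha (by simpa [e] using hMa)
    have h1 : M ≠ 1 := fun e => hDa (by simpa [e] using hMa)
    omega
  have hN1 : 1 ≤ N := by
    have h0 : N ≠ 0 := fun e => hb (by simpa [e] using hNb)
    omega
  obtain ⟨p, hpM⟩ : ∃ p, M = p + 1 := ⟨M - 1, by omega⟩
  obtain ⟨q, hqN⟩ : ∃ q, N = q + 1 := ⟨N - 1, by omega⟩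
  have hpa : D^[p] a ≠ 0 := Nat.find_min hexa (by omega)
  have hqb : D^[q] b ≠ 0 := Nat.find_min hexb (by omega)
  have hpa1 : D^[p + 1] a = 0 := hpM ▸ hMa
  have hqb1 : D^[q + 1] b = 0 := hqN ▸ hNb
  have hp1 : 1 ≤ p := by omega
  -- D^[p+q] (a*b) = 0 since D (a*b) = 0 and p + q ≥ 1
  have hab : D^[p + q] (a * b) = 0 := by
    have h1 : D^[1] (a * b) = 0 := by simpa using h
    exact lnd_iterate_eventually hadd h1 (by omega)
  rw [lnd_iterate_mul hadd hmul] at hab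
  -- all terms vanish except k = q
  rw [Finset.sum_eq_single q] at hab
  · have hpq : p + q - q = p := by omega
    rw [hpq, nsmul_eq_mul] at hab
    have hchoose : (((p + q).choose q : ℕ) : B) ≠ 0 :=
      Nat.cast_ne_zero.mpr (Nat.choose_pos (by omega)).ne'
    exact (mul_ne_zero hchoose (mul_ne_zero hpa hqb)) hab
  · intro k hk hkq
    rw [Finset.mem_range] at hk
    rcases Nat.lt_or_ge k q with hlt | hge
    · have h' : p + 1 ≤ p + q - k := by omega
      rw [lnd_iterate_eventually hadd hpa1 h', zero_mul, smul_zero]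
    · have : q + 1 ≤ k := by omega
      rw [lnd_iterate_eventually hadd hqb1 this, mul_zero, smul_zero]
  · intro hq'
    rw [Finset.mem_range] at hq'
    omega

lemma lnd_map_one (hmul : ∀ a b : B, D (a * b) = a * D b + D a * b) : D 1 = 0 := by
  have h := hmul 1 1
  simp only [mul_one, one_mul] at h
  exact (left_eq_add.mp h)

/-- The common kernel of a set of locally nilpotent derivations, as a subring. -/
def interKer (Δ : Set (B → B)) (hΔ : ∀ D ∈ Δ, IsLND D) : Subring B where
  carrier := {x : B | ∀ D ∈ Δ, D x = 0}
  zero_mem' := fun D hD => lnd_map_zero (hΔ D hD).1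
  one_mem' := fun D hD => lnd_map_one (hΔ D hD).2.1
  add_mem' := fun {x y} hx hy D hD => by
    rw [(hΔ D hD).1 x y, hx D hD, hy D hD, add_zero]
  neg_mem' := fun {x} hx D hD => by
    have := map_neg (AddMonoidHom.mk' D (hΔ D hD).1) x
    simp only [AddMonoidHom.mk'_apply] at this
    rw [this, hx D hD, neg_zero]
  mul_mem' := fun {x y} hx hy D hD => by
    rw [(hΔ D hD).2.1 x y, hx D hD, hy D hD, mul_zero, zero_mul, add_zero]

end Aux

/-- Elements of the subfield generated by the image of a subring of a domain
inside a field are fractions of elements of that subring. -/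
lemma mem_closure_image_subring {B L : Type*} [CommRing B] [Nontrivial B] [Field L]
    (φ : B →+* L) (S : Subring B) {x : L}
    (hx : x ∈ Subfield.closure (φ '' (S : Set B))) :
    ∃ a ∈ S, ∃ b ∈ S, b ≠ 0 ∧ x = φ a / φ b := by
  rw [Subfield.mem_closure_iff] at hx
  obtain ⟨y, hy, z, hz, hzx⟩ := hx
  rw [← Subring.coe_map, Subring.closure_eq] at hy hz
  obtain ⟨a, ha, rfl⟩ := hy
  obtain ⟨b, hb, rfl⟩ := hz
  by_cases hb0 : b = 0
  · refine ⟨0, S.zero_mem, 1, S.one_mem, one_ne_zero, ?_⟩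
    rw [hb0, map_zero, div_zero] at hzx
    rw [map_zero, map_one, zero_div, ← hzx]
  · exact ⟨a, ha, b, hb, hb0, hzx.symm⟩

/-- If `B` is a UFD of characteristic zero and `Δ` a set of locally nilpotent
derivations of `B`, then inside `L = Frac B` the subfield generated by
`A_Δ = ⋂_{D ∈ Δ} ker D` equals `K_Δ = ⋂_{D ∈ Δ} Frac (ker D)`. -/
theorem stmt13 {B L : Type*} [CommRing B] [IsDomain B] [CharZero B]
    [UniqueFactorizationMonoid B]
    [Field L] [Algebra B L] [IsFractionRing B L]
    (Δ : Set (B → B)) (hΔ : ∀ D ∈ Δ, IsLND D) :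
    Subfield.closure ((algebraMap B L) '' {x : B | ∀ D ∈ Δ, D x = 0}) =
      ⨅ D ∈ Δ, Subfield.closure ((algebraMap B L) '' {x : B | D x = 0}) := by
  have inj : Function.Injective (algebraMap B L) := IsFractionRing.injective B L
  apply le_antisymm
  · refine le_iInf fun D => le_iInf fun hD => Subfield.closure_mono ?_
    exact Set.image_mono fun x hx => hx D hD
  · intro x hx
    simp only [Subfield.mem_iInf] at hx
    -- reduced fraction for x
    set a := IsFractionRing.num B x with ha_def
    set b := (IsFractionRing.den B x : B) with hb_def
    have hcop : IsRelPrime a b := IsFractionRing.num_den_reduced B x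
    have hb0 : b ≠ 0 := nonZeroDivisors.coe_ne_zero _
    have hxab : algebraMap B L a / algebraMap B L b = x :=
      IsFractionRing.mk'_num_den' B x
    have hφb : algebraMap B L b ≠ 0 := fun h => hb0 (inj (by rw [h, map_zero]))
    -- a and b are killed by every D ∈ Δ
    have key : ∀ D ∈ Δ, D a = 0 ∧ D b = 0 := by
      intro D hDΔ
      have hD := hΔ D hDΔ
      have hker : {x : B | D x = 0} = ((interKer {D} (by simpa using hD) : Subring B) : Set B) := by
        ext y
        constructor
        · intro h D' hD'
          rw [Set.mem_singleton_iff] at hD'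
          subst hD'
          exact h
        · intro h
          exact h D rfl
      have hx' := hx D hDΔ
      rw [hker] at hx'
      obtain ⟨c, hc, d, hd, hd0, hxcd⟩ :=
        mem_closure_image_subring (algebraMap B L) _ hx'
      simp only [interKer, Subring.mem_mk, Set.mem_setOf_eq, Set.mem_singleton_iff,
        forall_eq] at hc hd
      have hφd : algebraMap B L d ≠ 0 := fun h => hd0 (inj (by rw [h, map_zero]))
      have hcross : a * d = c * b := by
        have h1 : algebraMap B L a / algebraMap B L b = algebraMap B L c / algebraMap B L d := by
          rw [hxab, hxcd]
        rw [div_eq_div_iff hφb hφd] at h1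
        apply inj
        rw [map_mul, map_mul, h1]
      -- b divides d
      have hbd : b ∣ d := (hcop.symm).dvd_of_dvd_mul_left ⟨c, by rw [hcross, mul_comm]⟩
      obtain ⟨e, he⟩ := hbd
      have he0 : e ≠ 0 := fun h => hd0 (by rw [he, h, mul_zero])
      have hDbe : D (b * e) = 0 := by rw [← he]; exact hd
      have hDb : D b = 0 := lnd_factorially_closed hD hb0 he0 hDbe
      have hDe : D e = 0 := lnd_factorially_closed hD he0 hb0 (by rwa [mul_comm])
      have hae : a * e = c := by
        have : (a * e) * b = c * b := by
          rw [← hcross, he]; ring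
        exact mul_right_cancel₀ hb0 this
      by_cases ha0 : a = 0
      · exact ⟨by rw [ha0]; exact lnd_map_zero hD.1, hDb⟩
      · refine ⟨lnd_factorially_closed hD ha0 he0 ?_, hDb⟩
        rw [hae]; exact hc
    have hamem : a ∈ {x : B | ∀ D ∈ Δ, D x = 0} := fun D hD => (key D hD).1
    have hbmem : b ∈ {x : B | ∀ D ∈ Δ, D x = 0} := fun D hD => (key D hD).2
    rw [← hxab]
    exact div_mem (Subfield.subset_closure ⟨a, hamem, rfl⟩)
      (Subfield.subset_closure ⟨b, hbmem, rfl⟩)
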